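/- Let h ≠ 0 be real, y real, and x real with |hx| < 1. Then the series ∑_{n=0}^∞ (xⁿ/n!)·y^{⟨n,h⟩} converges and exp_h(x,y) = (hx + √(1+h²x²))^{y/h} = ∑_{n=0}^∞ (xⁿ/n!)·y^{⟨n,h⟩}, where the central generalized power is defined by y^{⟨0,h⟩} = 1, y^{⟨2m,h⟩} = ∏_{k=0}^{m−1}(y − 2kh)(y + 2kh) for m ∈ ℕ, and y^{⟨2m+1,h⟩} = y·∏_{k=0}^{m−1}(y − (2k+1)h)(y + (2k+1)h) for m ∈ ℕ₀. -/

import Mathlib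

/-- The central generalized power `y^{⟨n,h⟩}`: `y^{⟨0,h⟩} = 1`,
`y^{⟨2m,h⟩} = ∏_{k<m} (y−2kh)(y+2kh)` and
`y^{⟨2m+1,h⟩} = y·∏_{k<m} (y−(2k+1)h)(y+(2k+1)h)`. -/
noncomputable def centralPow (y h : ℝ) (n : ℕ) : ℝ :=
  if n % 2 = 0 then
    ∏ k ∈ Finset.range (n / 2), ((y - 2 * k * h) * (y + 2 * k * h))
  else
    y * ∏ k ∈ Finset.range (n / 2), ((y - (2 * k + 1) * h) * (y + (2 * k + 1) * h))

lemma centralPow_step (y h : ℝ) (n : ℕ) :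
    centralPow y h (n+2) = centralPow y h n * ((y - n*h)*(y + n*h)) := by
  rcases Nat.even_or_odd n with ⟨m, rfl⟩ | ⟨m, rfl⟩
  · have h1 : (m+m+2) % 2 = 0 := by omega
    have h2 : (m+m+2) / 2 = m + 1 := by omega
    have h3 : (m+m) % 2 = 0 := by omega
    have h4 : (m+m) / 2 = m := by omega
    simp only [centralPow, h1, h2, h3, h4, if_pos rfl, if_true]
    rw [Finset.prod_range_succ]
    push_cast
    ring
  · have h1 : (2*m+1+2) % 2 = 1 := by omega
    have h2 : (2*m+1+2) / 2 = m + 1 := by omega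
    have h3 : (2*m+1) % 2 = 1 := by omega
    have h4 : (2*m+1) / 2 = m := by omega
    simp only [centralPow, h1, h2, h3, h4]
    norm_num
    rw [Finset.prod_range_succ]
    push_cast
    ring

open Real

/-- coefficients of the series in the variable `w = h x`, `a = y/h`. -/
noncomputable def cc (a : ℝ) : ℕ → ℝ
  | 0 => 1
  | 1 => a
  | (n+2) => cc a n * (a^2 - (n:ℝ)^2) / (((n:ℝ)+1) * ((n:ℝ)+2))

lemma cc_rec (a : ℝ) (n : ℕ) :
    cc a (n+2) = cc a n * (a^2 - (n:ℝ)^2) / (((n:ℝ)+1) * ((n:ℝ)+2)) := rfl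

lemma cc_bound (a : ℝ) : ∃ (p : ℕ) (K : ℝ), 1 ≤ K ∧
    ∀ n : ℕ, |cc a n| ≤ K * ((n:ℝ)+1)^p := by
  refine ⟨⌈a^2⌉₊, max 1 |a|, le_max_left _ _, ?_⟩
  set p := ⌈a^2⌉₊ with hp
  set K := max 1 |a| with hKdef
  have hK1 : (1:ℝ) ≤ K := le_max_left _ _
  have hK0 : (0:ℝ) ≤ K := by linarith
  have hpa : a^2 ≤ (p:ℝ) := Nat.le_ceil _
  intro n
  induction n using Nat.strong_induction_on with
  | _ n ih =>
    match n with
    | 0 => simpa [cc] using hK1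
    | 1 =>
        have h2 : (1:ℝ) ≤ ((1:ℝ)+1)^p := one_le_pow₀ (by norm_num)
        have e : |cc a 1| = |a| := by simp [cc]
        rw [e]
        have hKa : |a| ≤ K := le_max_right _ _
        push_cast
        nlinarith
    | (n+2) =>
        have ihn := ih n (by omega)
        have hn1 : (0:ℝ) < (n:ℝ)+1 := by positivity
        have hn2 : (0:ℝ) < (n:ℝ)+2 := by positivity
        have habs : |a^2 - (n:ℝ)^2| ≤ a^2 + (n:ℝ)^2 := by
          rw [abs_le]
          constructor <;> nlinarith [sq_nonneg a, sq_nonneg (n:ℝ)]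
        have hge : (0:ℝ) ≤ 2/((n:ℝ)+1) := by positivity
        have hber : 1 + (p:ℝ) * (2/((n:ℝ)+1)) ≤ (1 + 2/((n:ℝ)+1))^p :=
          one_add_mul_le_pow (by linarith) p
        have hthree : ((n:ℝ)+3)^p = ((n:ℝ)+1)^p * (1 + 2/((n:ℝ)+1))^p := by
          rw [← mul_pow]; congr 1; field_simp; ring
        have hB : (0:ℝ) < ((n:ℝ)+1)^p := by positivity
        have hexp : (1 + (p:ℝ)*(2/((n:ℝ)+1))) * (((n:ℝ)+1)*((n:ℝ)+2))
            = ((n:ℝ)+1)*((n:ℝ)+2) + 2*(p:ℝ)*((n:ℝ)+2) := by field_simp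
        have hpn : (0:ℝ) ≤ (p:ℝ) := Nat.cast_nonneg p
        have hkey : a^2 + (n:ℝ)^2 ≤ (1 + 2/((n:ℝ)+1))^p * (((n:ℝ)+1)*((n:ℝ)+2)) := by
          have h2 : (1 + (p:ℝ)*(2/((n:ℝ)+1))) * (((n:ℝ)+1)*((n:ℝ)+2))
              ≤ (1 + 2/((n:ℝ)+1))^p * (((n:ℝ)+1)*((n:ℝ)+2)) := by
            apply mul_le_mul_of_nonneg_right hber (by positivity)
          rw [hexp] at h2
          nlinarith
        have h1 : ((n:ℝ)+1)^p * (a^2 + (n:ℝ)^2)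
            ≤ ((n:ℝ)+3)^p * (((n:ℝ)+1)*((n:ℝ)+2)) := by
          rw [hthree, mul_assoc]
          exact mul_le_mul_of_nonneg_left hkey hB.le
        have e1 : |cc a (n+2)| = |cc a n| * |a^2 - (n:ℝ)^2| / (((n:ℝ)+1)*((n:ℝ)+2)) := by
          rw [cc_rec, abs_div, abs_mul, abs_of_pos (show (0:ℝ) < ((n:ℝ)+1)*((n:ℝ)+2) by positivity)]
        rw [e1, div_le_iff₀ (by positivity)]
        have step1 : |cc a n| * |a^2 - (n:ℝ)^2| ≤ (K * ((n:ℝ)+1)^p) * (a^2 + (n:ℝ)^2) :=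
          mul_le_mul ihn habs (abs_nonneg _) (by positivity)
        have step2 : (K * ((n:ℝ)+1)^p) * (a^2 + (n:ℝ)^2) ≤ K * (((n:ℝ)+3)^p * (((n:ℝ)+1)*((n:ℝ)+2))) := by
          rw [mul_assoc]
          exact mul_le_mul_of_nonneg_left h1 hK0
        have hcast : ((↑(n+2):ℝ)+1) = (n:ℝ)+3 := by push_cast; ring
        calc |cc a n| * |a^2 - (n:ℝ)^2| ≤ K * (((n:ℝ)+3)^p * (((n:ℝ)+1)*((n:ℝ)+2))) :=
              step1.trans step2
          _ = K * ((↑(n+2):ℝ)+1)^p * (((n:ℝ)+1)*((n:ℝ)+2)) := by rw [hcast]; ring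

lemma geom_summable (q : ℕ) {r : ℝ} (h0 : 0 ≤ r) (h1 : r < 1) :
    Summable (fun n : ℕ => ((n:ℝ)+1)^q * r^n) := by
  have hr : ‖r‖ < 1 := by rwa [Real.norm_eq_abs, abs_of_nonneg h0]
  have hs : Summable (fun n : ℕ => 2^q * ((n:ℝ)^q * r^n) + 2^q * r^n) :=
    ((summable_pow_mul_geometric_of_norm_lt_one q hr).mul_left _).add
      ((summable_geometric_of_norm_lt_one hr).mul_left _)
  refine Summable.of_nonneg_of_le (fun n => by positivity) (fun n => ?_) hs
  have hb : ((n:ℝ)+1)^q ≤ 2^q * ((n:ℝ)^q + 1) := by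
    rcases Nat.eq_zero_or_pos n with rfl | hn
    · have h2 : (1:ℝ) ≤ 2^q := one_le_pow₀ (by norm_num)
      have h3 : (0:ℝ) ≤ (0:ℝ)^q := by positivity
      have h4 : (1:ℝ) ≤ (0:ℝ)^q + 1 := by linarith
      have h5 : (1:ℝ) ≤ 2^q * ((0:ℝ)^q+1) :=
        le_trans (by norm_num) (mul_le_mul h2 h4 (by norm_num) (by positivity))
      simp only [Nat.cast_zero, zero_add, one_pow]
      linarith
    · have hn1 : (1:ℝ) ≤ (n:ℝ) := by exact_mod_cast hn
      calc ((n:ℝ)+1)^q ≤ (2*(n:ℝ))^q := by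
            apply pow_le_pow_left₀ (by positivity) (by linarith)
        _ = 2^q * (n:ℝ)^q := mul_pow _ _ _
        _ ≤ 2^q * ((n:ℝ)^q + 1) := by nlinarith [pow_pos (show (0:ℝ)<2 by norm_num) q]
  have hrn : (0:ℝ) ≤ r^n := by positivity
  nlinarith [mul_le_mul_of_nonneg_right hb hrn]

lemma summable_poly (a : ℝ) (j q : ℕ) {r : ℝ} (h0 : 0 ≤ r) (h1 : r < 1) :
    Summable (fun n : ℕ => ((n:ℝ)+1)^q * |cc a (n+j)| * r^n) := by
  obtain ⟨p, K, hK, hb⟩ := cc_bound a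
  have hK0 : (0:ℝ) ≤ K := by linarith
  refine Summable.of_nonneg_of_le (fun n => by positivity) (fun n => ?_)
    (((geom_summable (q+p) h0 h1).mul_left (K * ((j:ℝ)+1)^p)))
  have h2 : |cc a (n+j)| ≤ K * ((j:ℝ)+1)^p * ((n:ℝ)+1)^p := by
    have h3 : ((↑(n+j):ℝ)+1) ≤ ((j:ℝ)+1) * ((n:ℝ)+1) := by
      push_cast
      nlinarith [Nat.cast_nonneg (α := ℝ) n, Nat.cast_nonneg (α := ℝ) j]
    calc |cc a (n+j)| ≤ K * ((↑(n+j):ℝ)+1)^p := hb _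
      _ ≤ K * (((j:ℝ)+1) * ((n:ℝ)+1))^p := by
          apply mul_le_mul_of_nonneg_left (pow_le_pow_left₀ (by positivity) h3 p) hK0
      _ = K * ((j:ℝ)+1)^p * ((n:ℝ)+1)^p := by rw [mul_pow]; ring
  have hrn : (0:ℝ) ≤ r^n := by positivity
  have hq : (0:ℝ) ≤ ((n:ℝ)+1)^q := by positivity
  calc ((n:ℝ)+1)^q * |cc a (n+j)| * r^n
      ≤ ((n:ℝ)+1)^q * (K * ((j:ℝ)+1)^p * ((n:ℝ)+1)^p) * r^n := by
        apply mul_le_mul_of_nonneg_right (mul_le_mul_of_nonneg_left h2 hq) hrn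
    _ = K * ((j:ℝ)+1)^p * (((n:ℝ)+1)^(q+p) * r^n) := by rw [pow_add]; ring

lemma summable_dominated {f : ℕ → ℝ} (a : ℝ) {r : ℝ} (h0 : 0 ≤ r) (h1 : r < 1)
    (j q : ℕ) (C : ℝ)
    (hf : ∀ n, |f n| ≤ C * (((n:ℝ)+1)^q * |cc a (n+j)| * r^n)) : Summable f :=
  Summable.of_norm_bounded ((summable_poly a j q h0 h1).mul_left C)
    (by simpa [Real.norm_eq_abs] using hf)

lemma centralPow_eq (y h : ℝ) (hh : h ≠ 0) (n : ℕ) :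
    centralPow y h n = h^n * (n.factorial : ℝ) * cc (y/h) n := by
  induction n using Nat.strong_induction_on with
  | _ n ih =>
    match n with
    | 0 => simp [centralPow, cc]
    | 1 =>
        simp [centralPow, cc]
        field_simp
    | (n+2) =>
        rw [centralPow_step, ih n (by omega), cc_rec]
        have hfac : ((n+2).factorial : ℝ) = ((n:ℝ)+2) * (((n:ℝ)+1) * (n.factorial : ℝ)) := by
          rw [Nat.factorial_succ, Nat.factorial_succ]
          push_cast
          ring
        rw [hfac]
        have hn1 : ((n:ℝ)+1) ≠ 0 := by positivity
        have hn2 : ((n:ℝ)+2) ≠ 0 := by positivity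
        field_simp
        ring

open Real in
theorem key_series (a : ℝ) {w : ℝ} (hw : |w| < 1) :
    HasSum (fun n : ℕ => cc a n * w^n) (Real.exp (a * Real.arsinh w)) := by
  set ρ : ℝ := (1 + |w|)/2 with hρdef
  have hρ0 : 0 < ρ := by positivity
  have hρ1 : ρ < 1 := by
    rw [hρdef]; linarith [hw]
  have hwρ : |w| < ρ := by rw [hρdef]; linarith [hw]
  -- summability statements
  have Sm0 : ∀ z : ℝ, |z| < 1 → Summable (fun n : ℕ => cc a n * z^n) := by
    intro z hz
    apply summable_dominated a (abs_nonneg z) hz 0 0 1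
    intro n
    have : |cc a n * z^n| = 1 * (((n:ℝ)+1)^0 * |cc a (n+0)| * |z|^n) := by
      simp [abs_mul, abs_pow]
    exact this.le
  have Sm1 : ∀ z : ℝ, |z| < 1 → Summable (fun n : ℕ => ((n:ℝ)+1) * cc a (n+1) * z^n) := by
    intro z hz
    apply summable_dominated a (abs_nonneg z) hz 1 1 1
    intro n
    have : |((n:ℝ)+1) * cc a (n+1) * z^n| = 1 * (((n:ℝ)+1)^1 * |cc a (n+1)| * |z|^n) := by
      rw [abs_mul, abs_mul, abs_pow, abs_of_pos (show (0:ℝ) < (n:ℝ)+1 by positivity),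
        pow_one, one_mul]
    exact this.le
  have Sm2 : ∀ z : ℝ, |z| < 1 →
      Summable (fun n : ℕ => ((n:ℝ)+2) * ((n:ℝ)+1) * cc a (n+2) * z^n) := by
    intro z hz
    apply summable_dominated a (abs_nonneg z) hz 2 2 2
    intro n
    have he : |((n:ℝ)+2) * ((n:ℝ)+1) * cc a (n+2) * z^n|
        = ((n:ℝ)+2) * ((n:ℝ)+1) * |cc a (n+2)| * |z|^n := by
      rw [abs_mul, abs_mul, abs_mul, abs_pow,
        abs_of_pos (show (0:ℝ) < (n:ℝ)+2 by positivity),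
        abs_of_pos (show (0:ℝ) < (n:ℝ)+1 by positivity)]
    rw [he]
    have hb : ((n:ℝ)+2) * ((n:ℝ)+1) ≤ 2 * ((n:ℝ)+1)^2 := by nlinarith [Nat.cast_nonneg (α := ℝ) n]
    have h1 : (0:ℝ) ≤ |cc a (n+2)| * |z|^n := by positivity
    nlinarith [mul_le_mul_of_nonneg_right hb h1]
  have Smn : ∀ z : ℝ, |z| < 1 → Summable (fun n : ℕ => (n:ℝ) * cc a n * z^n) := by
    intro z hz
    apply summable_dominated a (abs_nonneg z) hz 0 1 1
    intro n
    have he : |(n:ℝ) * cc a n * z^n| = (n:ℝ) * |cc a n| * |z|^n := by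
      rw [abs_mul, abs_mul, abs_pow, abs_of_nonneg (Nat.cast_nonneg (α := ℝ) n)]
    rw [he, one_mul, pow_one]
    have h1 : (0:ℝ) ≤ |cc a (n+0)| * |z|^n := by positivity
    have : (n:ℝ) ≤ (n:ℝ)+1 := by linarith
    have h2 := mul_le_mul_of_nonneg_right this h1
    calc (n:ℝ) * |cc a n| * |z|^n = (n:ℝ) * (|cc a (n+0)| * |z|^n) := by
          norm_num; ring
      _ ≤ ((n:ℝ)+1) * (|cc a (n+0)| * |z|^n) := h2
      _ = ((n:ℝ)+1) * |cc a (n+0)| * |z|^n := by ring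
  have Smnn : ∀ z : ℝ, |z| < 1 →
      Summable (fun n : ℕ => (n:ℝ) * ((n:ℝ)-1) * cc a n * z^n) := by
    intro z hz
    apply summable_dominated a (abs_nonneg z) hz 0 2 1
    intro n
    have he : |(n:ℝ) * ((n:ℝ)-1) * cc a n * z^n| = |(n:ℝ) * ((n:ℝ)-1)| * |cc a n| * |z|^n := by
      rw [abs_mul, abs_mul, abs_pow]
    rw [he, one_mul]
    have hb : |(n:ℝ) * ((n:ℝ)-1)| ≤ ((n:ℝ)+1)^2 := by
      rw [abs_le]
      constructor <;> nlinarith [Nat.cast_nonneg (α := ℝ) n]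
    have h1 : (0:ℝ) ≤ |cc a (n+0)| * |z|^n := by positivity
    have h2 := mul_le_mul_of_nonneg_right hb h1
    calc |(n:ℝ) * ((n:ℝ)-1)| * |cc a n| * |z|^n
        = |(n:ℝ) * ((n:ℝ)-1)| * (|cc a (n+0)| * |z|^n) := by norm_num; ring
      _ ≤ ((n:ℝ)+1)^2 * (|cc a (n+0)| * |z|^n) := h2
      _ = ((n:ℝ)+1)^2 * |cc a (n+0)| * |z|^n := by ring
  -- inverse-power helper
  have hpow : ∀ n : ℕ, ρ^(n-1) ≤ ρ⁻¹ * ρ^n := by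
    intro n
    cases n with
    | zero =>
        simp only [Nat.zero_sub, pow_zero, mul_one]
        have h2 : ρ * ρ⁻¹ = 1 := mul_inv_cancel₀ hρ0.ne'
        have h3 : 0 < ρ⁻¹ := inv_pos.2 hρ0
        nlinarith
    | succ m =>
        have : ρ⁻¹ * ρ^(m+1) = ρ^m := by
          rw [pow_succ]
          field_simp
        rw [this]
        simp
  -- summable derivative bounds
  have Smu : Summable (fun n : ℕ => ((n:ℝ)+1) * |cc a n| * ρ^(n-1)) := by
    apply summable_dominated a hρ0.le hρ1 0 1 ρ⁻¹
    intro n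
    have hnn : (0:ℝ) ≤ ((n:ℝ)+1) * |cc a n| * ρ^(n-1) := by positivity
    rw [abs_of_nonneg hnn, pow_one]
    have h2 := mul_le_mul_of_nonneg_left (hpow n)
      (show (0:ℝ) ≤ ((n:ℝ)+1) * |cc a n| by positivity)
    calc ((n:ℝ)+1) * |cc a n| * ρ^(n-1) ≤ ((n:ℝ)+1) * |cc a n| * (ρ⁻¹ * ρ^n) := h2
      _ = ρ⁻¹ * (((n:ℝ)+1) * |cc a (n+0)| * ρ^n) := by norm_num; ring
  have Smu1 : Summable (fun n : ℕ => ((n:ℝ)+1)^2 * |cc a (n+1)| * ρ^(n-1)) := by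
    apply summable_dominated a hρ0.le hρ1 1 2 ρ⁻¹
    intro n
    have hnn : (0:ℝ) ≤ ((n:ℝ)+1)^2 * |cc a (n+1)| * ρ^(n-1) := by positivity
    rw [abs_of_nonneg hnn]
    have h2 := mul_le_mul_of_nonneg_left (hpow n)
      (show (0:ℝ) ≤ ((n:ℝ)+1)^2 * |cc a (n+1)| by positivity)
    calc ((n:ℝ)+1)^2 * |cc a (n+1)| * ρ^(n-1) ≤ ((n:ℝ)+1)^2 * |cc a (n+1)| * (ρ⁻¹ * ρ^n) := h2
      _ = ρ⁻¹ * (((n:ℝ)+1)^2 * |cc a (n+1)| * ρ^n) := by ring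
  -- shifting identities
  have shift1 : ∀ z : ℝ, |z| < ρ →
      (∑' n : ℕ, cc a n * ((n:ℝ) * z^(n-1))) = ∑' n : ℕ, ((n:ℝ)+1) * cc a (n+1) * z^n := by
    intro z hz
    have hs : Summable (fun n : ℕ => cc a n * ((n:ℝ) * z^(n-1))) := by
      apply summable_dominated a hρ0.le hρ1 0 1 ρ⁻¹
      intro n
      have he : |cc a n * ((n:ℝ) * z^(n-1))| = |cc a n| * ((n:ℝ) * |z|^(n-1)) := by
        rw [abs_mul, abs_mul, abs_pow, abs_of_nonneg (Nat.cast_nonneg (α := ℝ) n)]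
      rw [he, pow_one]
      have h1 : |z|^(n-1) ≤ ρ^(n-1) := pow_le_pow_left₀ (abs_nonneg z) hz.le _
      have h3 : (n:ℝ) * |z|^(n-1) ≤ ((n:ℝ)+1) * (ρ⁻¹ * ρ^n) :=
        mul_le_mul (by linarith) (h1.trans (hpow n)) (by positivity) (by positivity)
      calc |cc a n| * ((n:ℝ) * |z|^(n-1)) ≤ |cc a n| * (((n:ℝ)+1) * (ρ⁻¹ * ρ^n)) :=
            mul_le_mul_of_nonneg_left h3 (abs_nonneg _)
        _ = ρ⁻¹ * (((n:ℝ)+1) * |cc a (n+0)| * ρ^n) := by norm_num; ring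
    rw [Summable.tsum_eq_zero_add hs]
    simp only [Nat.cast_zero, zero_mul, mul_zero, zero_add]
    apply tsum_congr
    intro n
    have : (n+1) - 1 = n := rfl
    rw [this]
    push_cast
    ring
  have shift2 : ∀ z : ℝ, |z| < ρ →
      (∑' n : ℕ, (((n:ℝ)+1) * cc a (n+1)) * ((n:ℝ) * z^(n-1)))
        = ∑' n : ℕ, ((n:ℝ)+2) * ((n:ℝ)+1) * cc a (n+2) * z^n := by
    intro z hz
    have hs : Summable (fun n : ℕ => (((n:ℝ)+1) * cc a (n+1)) * ((n:ℝ) * z^(n-1))) := by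
      apply summable_dominated a hρ0.le hρ1 1 2 ρ⁻¹
      intro n
      have he : |(((n:ℝ)+1) * cc a (n+1)) * ((n:ℝ) * z^(n-1))|
          = (((n:ℝ)+1) * |cc a (n+1)|) * ((n:ℝ) * |z|^(n-1)) := by
        rw [abs_mul, abs_mul, abs_mul, abs_pow,
          abs_of_nonneg (Nat.cast_nonneg (α := ℝ) n),
          abs_of_pos (show (0:ℝ) < (n:ℝ)+1 by positivity)]
      rw [he]
      have h1 : |z|^(n-1) ≤ ρ^(n-1) := pow_le_pow_left₀ (abs_nonneg z) hz.le _
      have h3 : (n:ℝ) * |z|^(n-1) ≤ ((n:ℝ)+1) * (ρ⁻¹ * ρ^n) :=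
        mul_le_mul (by linarith) (h1.trans (hpow n)) (by positivity) (by positivity)
      calc (((n:ℝ)+1) * |cc a (n+1)|) * ((n:ℝ) * |z|^(n-1))
          ≤ (((n:ℝ)+1) * |cc a (n+1)|) * (((n:ℝ)+1) * (ρ⁻¹ * ρ^n)) :=
            mul_le_mul_of_nonneg_left h3 (by positivity)
        _ = ρ⁻¹ * (((n:ℝ)+1)^2 * |cc a (n+1)| * ρ^n) := by ring
    rw [Summable.tsum_eq_zero_add hs]
    simp only [Nat.cast_zero, zero_mul, mul_zero, zero_add]
    apply tsum_congr
    intro n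
    have : (n+1) - 1 = n := rfl
    rw [this]
    push_cast
    ring
  have shiftA : ∀ z : ℝ, |z| < 1 →
      (∑' n : ℕ, (n:ℝ) * cc a n * z^n) = z * ∑' n : ℕ, ((n:ℝ)+1) * cc a (n+1) * z^n := by
    intro z hz
    rw [← tsum_mul_left, Summable.tsum_eq_zero_add (Smn z hz)]
    simp only [Nat.cast_zero, zero_mul, zero_add]
    apply tsum_congr
    intro n
    push_cast
    ring
  have shiftB : ∀ z : ℝ, |z| < 1 →
      (∑' n : ℕ, (n:ℝ) * ((n:ℝ)-1) * cc a n * z^n)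
        = z^2 * ∑' n : ℕ, ((n:ℝ)+2) * ((n:ℝ)+1) * cc a (n+2) * z^n := by
    intro z hz
    rw [← tsum_mul_left, Summable.tsum_eq_zero_add (Smnn z hz),
      Summable.tsum_eq_zero_add ((summable_nat_add_iff 1).2 (Smnn z hz))]
    simp only [Nat.cast_zero, Nat.cast_one, zero_mul, zero_add]
    norm_num
    apply tsum_congr
    intro n
    push_cast
    ring
  -- the differential equation for the sum
  have ode : ∀ z : ℝ, |z| < 1 →
      (1+z^2) * (∑' n : ℕ, ((n:ℝ)+2) * ((n:ℝ)+1) * cc a (n+2) * z^n)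
        + z * (∑' n : ℕ, ((n:ℝ)+1) * cc a (n+1) * z^n)
        = a^2 * ∑' n : ℕ, cc a n * z^n := by
    intro z hz
    have e1 : (∑' n : ℕ, (a^2 - (n:ℝ)^2) * (cc a n * z^n))
        = ∑' n : ℕ, ((n:ℝ)+2) * ((n:ℝ)+1) * cc a (n+2) * z^n := by
      apply tsum_congr
      intro n
      rw [cc_rec]
      have hn1 : ((n:ℝ)+1) ≠ 0 := by positivity
      have hn2 : ((n:ℝ)+2) ≠ 0 := by positivity
      field_simp
    have e2 : (fun n : ℕ => (a^2 - (n:ℝ)^2) * (cc a n * z^n))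
        = fun n : ℕ => a^2 * (cc a n * z^n)
          - ((n:ℝ) * cc a n * z^n + (n:ℝ) * ((n:ℝ)-1) * cc a n * z^n) := by
      funext n; ring
    rw [e2] at e1
    rw [Summable.tsum_sub ((Sm0 z hz).mul_left (a^2)) ((Smn z hz).add (Smnn z hz)),
      Summable.tsum_add (Smn z hz) (Smnn z hz), tsum_mul_left, shiftA z hz, shiftB z hz] at e1
    linear_combination -e1
  -- the ball and the derivative of the sum
  set B : Set ℝ := Metric.ball (0:ℝ) ρ with hBdef
  have hmem : ∀ z : ℝ, z ∈ B ↔ |z| < ρ := by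
    intro z; rw [hBdef, Metric.mem_ball, Real.dist_eq, sub_zero]
  have hBopen : IsOpen B := Metric.isOpen_ball
  have hBconn : IsPreconnected B := (convex_ball (0:ℝ) ρ).isPreconnected
  have h0B : (0:ℝ) ∈ B := by rw [hmem]; simpa using hρ0
  have Dg : ∀ z ∈ B, HasDerivAt (fun t : ℝ => ∑' n : ℕ, cc a n * t^n)
      (∑' n : ℕ, ((n:ℝ)+1) * cc a (n+1) * z^n) z := by
    intro z hz
    have hz1 : |z| < ρ := (hmem z).1 hz
    have H := hasDerivAt_tsum_of_isPreconnected Smu hBopen hBconn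
      (g := fun (n : ℕ) (t : ℝ) => cc a n * t^n)
      (g' := fun (n : ℕ) (t : ℝ) => cc a n * ((n:ℝ) * t^(n-1)))
      (fun n t _ => (hasDerivAt_pow n t).const_mul (cc a n))
      (fun n t ht => ?_) h0B (Sm0 0 (by norm_num)) hz
    · rwa [shift1 z hz1] at H
    · have htρ : |t| < ρ := (hmem t).1 ht
      rw [Real.norm_eq_abs, abs_mul, abs_mul, abs_pow,
        abs_of_nonneg (Nat.cast_nonneg (α := ℝ) n)]
      have h1 : |t|^(n-1) ≤ ρ^(n-1) := pow_le_pow_left₀ (abs_nonneg t) htρ.le _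
      have h2 : (n:ℝ) * |t|^(n-1) ≤ ((n:ℝ)+1) * ρ^(n-1) :=
        mul_le_mul (by linarith) h1 (by positivity) (by positivity)
      calc |cc a n| * ((n:ℝ) * |t|^(n-1)) ≤ |cc a n| * (((n:ℝ)+1) * ρ^(n-1)) :=
            mul_le_mul_of_nonneg_left h2 (abs_nonneg _)
        _ = ((n:ℝ)+1) * |cc a n| * ρ^(n-1) := by ring
  have Dg1 : ∀ z ∈ B, HasDerivAt (fun t : ℝ => ∑' n : ℕ, ((n:ℝ)+1) * cc a (n+1) * t^n)
      (∑' n : ℕ, ((n:ℝ)+2) * ((n:ℝ)+1) * cc a (n+2) * z^n) z := by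
    intro z hz
    have hz1 : |z| < ρ := (hmem z).1 hz
    have H := hasDerivAt_tsum_of_isPreconnected Smu1 hBopen hBconn
      (g := fun (n : ℕ) (t : ℝ) => ((n:ℝ)+1) * cc a (n+1) * t^n)
      (g' := fun (n : ℕ) (t : ℝ) => (((n:ℝ)+1) * cc a (n+1)) * ((n:ℝ) * t^(n-1)))
      (fun n t _ => (hasDerivAt_pow n t).const_mul (((n:ℝ)+1) * cc a (n+1)))
      (fun n t ht => ?_) h0B (Sm1 0 (by norm_num)) hz
    · rwa [shift2 z hz1] at H
    · have htρ : |t| < ρ := (hmem t).1 ht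
      rw [Real.norm_eq_abs, abs_mul, abs_mul, abs_mul, abs_pow,
        abs_of_nonneg (Nat.cast_nonneg (α := ℝ) n),
        abs_of_pos (show (0:ℝ) < (n:ℝ)+1 by positivity)]
      have h1 : |t|^(n-1) ≤ ρ^(n-1) := pow_le_pow_left₀ (abs_nonneg t) htρ.le _
      have h2 : (n:ℝ) * |t|^(n-1) ≤ ((n:ℝ)+1) * ρ^(n-1) :=
        mul_le_mul (by linarith) h1 (by positivity) (by positivity)
      calc (((n:ℝ)+1) * |cc a (n+1)|) * ((n:ℝ) * |t|^(n-1))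
          ≤ (((n:ℝ)+1) * |cc a (n+1)|) * (((n:ℝ)+1) * ρ^(n-1)) :=
            mul_le_mul_of_nonneg_left h2 (by positivity)
        _ = ((n:ℝ)+1)^2 * |cc a (n+1)| * ρ^(n-1) := by ring
  -- the interval J
  set L : ℝ := Real.arsinh ρ with hLdef
  have hL0 : 0 < L := by rw [hLdef, Real.arsinh_pos_iff]; exact hρ0
  set J : Set ℝ := Set.Ioo (-L) L with hJdef
  have hsinhρ : ∀ s ∈ J, |Real.sinh s| < ρ := by
    intro s hs
    rw [abs_lt]
    constructor
    · have := Real.sinh_lt_sinh.2 hs.1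
      rwa [Real.sinh_neg, Real.sinh_arsinh] at this
    · have := Real.sinh_lt_sinh.2 hs.2
      rwa [Real.sinh_arsinh] at this
  have hsinhB : ∀ s ∈ J, Real.sinh s ∈ B := fun s hs => (hmem _).2 (hsinhρ s hs)
  have hsinh1 : ∀ s ∈ J, |Real.sinh s| < 1 := fun s hs => (hsinhρ s hs).trans hρ1
  -- derivative of ψ and ψ₁
  have Hψ : ∀ s ∈ J, HasDerivAt (fun t : ℝ => ∑' n : ℕ, cc a n * (Real.sinh t)^n)
      (Real.cosh s * ∑' n : ℕ, ((n:ℝ)+1) * cc a (n+1) * (Real.sinh s)^n) s := by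
    intro s hs
    have := (Dg (Real.sinh s) (hsinhB s hs)).comp s (Real.hasDerivAt_sinh s)
    rw [mul_comm] at this
    exact this
  have Hψ1 : ∀ s ∈ J, HasDerivAt
      (fun t : ℝ => Real.cosh t * ∑' n : ℕ, ((n:ℝ)+1) * cc a (n+1) * (Real.sinh t)^n)
      (a^2 * ∑' n : ℕ, cc a n * (Real.sinh s)^n) s := by
    intro s hs
    have h1 : HasDerivAt (fun t : ℝ => ∑' n : ℕ, ((n:ℝ)+1) * cc a (n+1) * (Real.sinh t)^n)
        ((∑' n : ℕ, ((n:ℝ)+2) * ((n:ℝ)+1) * cc a (n+2) * (Real.sinh s)^n) * Real.cosh s) s :=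
      (Dg1 (Real.sinh s) (hsinhB s hs)).comp s (Real.hasDerivAt_sinh s)
    have h2 : HasDerivAt
        (fun t : ℝ => Real.cosh t * ∑' n : ℕ, ((n:ℝ)+1) * cc a (n+1) * (Real.sinh t)^n) _ s :=
      (Real.hasDerivAt_cosh s).mul h1
    convert h2 using 1
    have hcosh : Real.cosh s ^ 2 = 1 + Real.sinh s ^ 2 := by rw [Real.cosh_sq]; ring
    have ho := ode (Real.sinh s) (hsinh1 s hs)
    set G2 := ∑' n : ℕ, ((n:ℝ)+2) * ((n:ℝ)+1) * cc a (n+2) * (Real.sinh s)^n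
    linear_combination -ho - G2 * hcosh
  -- constancy helper on J
  have hconst : ∀ f : ℝ → ℝ, (∀ s ∈ J, HasDerivAt f 0 s) → ∀ t ∈ J, f t = f 0 := by
    intro f hf t ht
    have hsub : Set.Icc (min 0 t) (max 0 t) ⊆ J := by
      intro s hsmem
      constructor
      · have h1 : -L < min 0 t := lt_min (by linarith) ht.1
        have := hsmem.1
        linarith
      · have h1 : max 0 t < L := max_lt hL0 ht.2
        have := hsmem.2
        linarith
    have hcont : ContinuousOn f (Set.Icc (min 0 t) (max 0 t)) :=
      fun sx hsx => ((hf sx (hsub hsx)).continuousAt).continuousWithinAt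
    have hder : ∀ sx ∈ Set.Ico (min 0 t) (max 0 t), HasDerivWithinAt f 0 (Set.Ici sx) sx :=
      fun sx hsx => (hf sx (hsub (Set.Ico_subset_Icc_self hsx))).hasDerivWithinAt
    have hmin := constant_of_has_deriv_right_zero hcont hder
    have h1 := hmin t ⟨min_le_right _ _, le_max_right _ _⟩
    have h2 := hmin 0 ⟨min_le_left _ _, le_max_left _ _⟩
    rw [h1, h2]
  have h0J : (0:ℝ) ∈ J := ⟨by linarith, hL0⟩
  -- values at zero
  have t0 : (∑' n : ℕ, cc a n * (Real.sinh 0)^n) = 1 := by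
    rw [Real.sinh_zero, tsum_eq_single 0 (fun n hn => by
      rw [zero_pow hn, mul_zero])]
    simp [cc]
  have t1 : (∑' n : ℕ, ((n:ℝ)+1) * cc a (n+1) * (Real.sinh 0)^n) = a := by
    rw [Real.sinh_zero, tsum_eq_single 0 (fun n hn => by
      rw [zero_pow hn, mul_zero])]
    norm_num
    simp [cc]
  -- exponential derivative helper
  have hexpd : ∀ (c s : ℝ), HasDerivAt (fun t : ℝ => Real.exp (c * t)) (c * Real.exp (c * s)) s := by
    intro c s
    have h1 : HasDerivAt (fun t : ℝ => c * t) c s := by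
      simpa using (hasDerivAt_id s).const_mul c
    have := (Real.hasDerivAt_exp (c*s)).comp s h1
    rw [mul_comm] at this
    exact this
  -- first integration: u = exp(-a t) * (ψ₁ + a ψ) is constant
  have Hu : ∀ t ∈ J,
      Real.exp (-a * t) * ((Real.cosh t * ∑' n : ℕ, ((n:ℝ)+1) * cc a (n+1) * (Real.sinh t)^n)
        + a * ∑' n : ℕ, cc a n * (Real.sinh t)^n) = 2*a := by
    have hc := hconst (fun t => Real.exp (-a * t) *
        ((Real.cosh t * ∑' n : ℕ, ((n:ℝ)+1) * cc a (n+1) * (Real.sinh t)^n)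
          + a * ∑' n : ℕ, cc a n * (Real.sinh t)^n))
      (by
        intro s hs
        have h1 : HasDerivAt (fun t => Real.exp (-a * t) *
            ((Real.cosh t * ∑' n : ℕ, ((n:ℝ)+1) * cc a (n+1) * (Real.sinh t)^n)
              + a * ∑' n : ℕ, cc a n * (Real.sinh t)^n)) _ s :=
          (hexpd (-a) s).mul ((Hψ1 s hs).add ((Hψ s hs).const_mul a))
        convert h1 using 1
        ring)
    intro t ht
    have hbeta := hc t ht
    beta_reduce at hbeta
    rw [hbeta]
    simp only [mul_zero, Real.exp_zero, Real.cosh_zero, one_mul, t0, t1]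
    ring
  have hG : ∀ t ∈ J,
      (Real.cosh t * ∑' n : ℕ, ((n:ℝ)+1) * cc a (n+1) * (Real.sinh t)^n)
        + a * ∑' n : ℕ, cc a n * (Real.sinh t)^n = 2*a*Real.exp (a*t) := by
    intro t ht
    have h2 : Real.exp (a*t) * (Real.exp (-a*t) *
        ((Real.cosh t * ∑' n : ℕ, ((n:ℝ)+1) * cc a (n+1) * (Real.sinh t)^n)
          + a * ∑' n : ℕ, cc a n * (Real.sinh t)^n)) = Real.exp (a*t) * (2*a) := by
      rw [Hu t ht]
    rw [← mul_assoc, ← Real.exp_add] at h2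
    have he : a*t + -a*t = 0 := by ring
    rw [he, Real.exp_zero, one_mul] at h2
    rw [h2]; ring
  -- second integration: v = exp(a t) * ψ - exp(a t)^2 is constant
  have Hv : ∀ t ∈ J,
      Real.exp (a*t) * (∑' n : ℕ, cc a n * (Real.sinh t)^n)
        - Real.exp (a*t) * Real.exp (a*t) = 0 := by
    have hc := hconst (fun t => Real.exp (a*t) * (∑' n : ℕ, cc a n * (Real.sinh t)^n)
        - Real.exp (a*t) * Real.exp (a*t))
      (by
        intro s hs
        have h1 : HasDerivAt (fun t => Real.exp (a*t) * (∑' n : ℕ, cc a n * (Real.sinh t)^n)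
            - Real.exp (a*t) * Real.exp (a*t)) _ s :=
          ((hexpd a s).mul (Hψ s hs)).sub ((hexpd a s).mul (hexpd a s))
        convert h1 using 1
        have hGs := hG s hs
        linear_combination (-(Real.exp (a*s))) * hGs)
    intro t ht
    have hbeta := hc t ht
    beta_reduce at hbeta
    rw [hbeta]
    simp only [mul_zero, Real.exp_zero, one_mul, t0]
    ring
  -- evaluate at σ = arsinh w
  have hσJ : Real.arsinh w ∈ J := by
    constructor
    · have : Real.arsinh (-ρ) < Real.arsinh w := Real.arsinh_lt_arsinh.2 (by
        have := abs_lt.1 hwρ; linarith [this.1])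
      rwa [Real.arsinh_neg] at this
    · exact Real.arsinh_lt_arsinh.2 (by have := abs_lt.1 hwρ; linarith [this.2])
  have hv := Hv (Real.arsinh w) hσJ
  rw [Real.sinh_arsinh] at hv
  have hexpne : Real.exp (a * Real.arsinh w) ≠ 0 := Real.exp_ne_zero _
  have hval : (∑' n : ℕ, cc a n * w^n) = Real.exp (a * Real.arsinh w) := by
    have h3 : Real.exp (a * Real.arsinh w) * (∑' n : ℕ, cc a n * w^n)
        = Real.exp (a * Real.arsinh w) * Real.exp (a * Real.arsinh w) := by
      linarith [hv]
    exact mul_left_cancel₀ hexpne h3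
  have := (Sm0 w hw).hasSum
  rwa [hval] at this

/-- for `|hx| < 1`, `exp_h(x,y) = (hx+√(1+h²x²))^(y/h)` is the
sum of the series `∑ xⁿ/n! · y^{⟨n,h⟩}`. -/
theorem kaniadakis_exp_series (h x y : ℝ) (hh : h ≠ 0) (hx : |h * x| < 1) :
    HasSum (fun n : ℕ => x ^ n / n.factorial * centralPow y h n)
      ((h * x + Real.sqrt (1 + h ^ 2 * x ^ 2)) ^ (y / h)) := by
  have hterm : (fun n : ℕ => x ^ n / n.factorial * centralPow y h n)
      = fun n : ℕ => cc (y/h) n * (h*x)^n := by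
    funext n
    rw [centralPow_eq y h hh n]
    have hfac : ((n.factorial : ℝ)) ≠ 0 := by
      exact_mod_cast n.factorial_ne_zero
    rw [mul_pow]
    field_simp
  have hsum := key_series (y/h) hx
  rw [hterm, show (1:ℝ) + h^2*x^2 = 1 + (h*x)^2 from by ring, ← Real.exp_arsinh (h*x),
    Real.rpow_def_of_pos (Real.exp_pos _), Real.log_exp,
    mul_comm (Real.arsinh (h*x)) (y/h)]
  exact hsum
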